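/- For α ∈ (1/2, 1) and κ > 0, the integral ∫_0^∞ √t · G(κ t^{α - 1/2}) dt is finite and bounded above by (2/(2α-1))·κ^{-3/(2α-1)}·∫_0^∞ v^{(6-6α)/(2α-1)} φ(v) dv, which is a finite constant. -/

import Mathlib

open MeasureTheory
open Real Set Filter

noncomputable def phi (x : ℝ) : ℝ := (Real.sqrt (2 * Real.pi))⁻¹ * Real.exp (-x ^ 2 / 2)

noncomputable def Phi (x : ℝ) : ℝ := ∫ t in Set.Iic x, phi t

noncomputable def G (x : ℝ) : ℝ := phi x - x * (1 - Phi x)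

lemma phi_pos (x : ℝ) : 0 < phi x := by
  have : 0 < Real.sqrt (2 * Real.pi) := Real.sqrt_pos.2 (by positivity)
  exact mul_pos (inv_pos.2 this) (Real.exp_pos _)

lemma phi_eq (x : ℝ) : phi x = (Real.sqrt (2 * Real.pi))⁻¹ * Real.exp (-(1/2) * x ^ 2) := by
  unfold phi; ring_nf

lemma integrable_phi : Integrable phi := by
  have h := (integrable_exp_neg_mul_sq (by norm_num : (0:ℝ) < 1/2)).const_mul
    (Real.sqrt (2 * Real.pi))⁻¹
  refine h.congr (Filter.Eventually.of_forall fun x => ?_)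
  rw [phi_eq]

lemma integral_phi : ∫ x, phi x = 1 := by
  have h : ∫ x, phi x = (Real.sqrt (2 * Real.pi))⁻¹ * ∫ x, Real.exp (-(1/2) * x ^ 2) := by
    rw [← integral_const_mul]
    exact integral_congr_ae (Filter.Eventually.of_forall fun x => phi_eq x)
  rw [h, integral_gaussian]
  rw [show Real.pi / (1/2) = 2 * Real.pi by ring]
  exact inv_mul_cancel₀ (by positivity)

lemma hasDerivAt_phi (x : ℝ) : HasDerivAt phi (-x * phi x) x := by
  have h1 : HasDerivAt (fun x : ℝ => -x ^ 2 / 2) (-x) x := by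
    have := ((hasDerivAt_pow 2 x).neg).div_const 2
    simpa using this.congr_deriv (by ring)
  have h2 := (h1.exp).const_mul (Real.sqrt (2 * Real.pi))⁻¹
  refine h2.congr_deriv ?_
  unfold phi; ring

lemma tendsto_phi_atTop : Tendsto phi atTop (nhds 0) := by
  have h1 : Tendsto (fun x : ℝ => -x ^ 2 / 2) atTop atBot := by
    apply Filter.Tendsto.atBot_div_const (by norm_num)
    exact Filter.tendsto_neg_atBot_iff.2 (tendsto_pow_atTop (by norm_num))
  have h2 := (Real.tendsto_exp_atBot.comp h1).const_mul (Real.sqrt (2 * Real.pi))⁻¹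
  rw [mul_zero] at h2
  exact h2

lemma monotone_Phi : Monotone Phi := fun x y hxy =>
  setIntegral_mono_set integrable_phi.integrableOn
    (Filter.Eventually.of_forall fun t => (phi_pos t).le)
    (HasSubset.Subset.eventuallyLE (Set.Iic_subset_Iic.2 hxy))

lemma continuous_phi : Continuous phi := by
  unfold phi; fun_prop

lemma measurable_G : Measurable G :=
  (continuous_phi.measurable).sub
    (measurable_id.mul (measurable_const.sub monotone_Phi.measurable))

lemma one_sub_Phi (x : ℝ) : 1 - Phi x = ∫ t in Set.Ioi x, phi t := by
  have := intervalIntegral.integral_Iic_add_Ioi (b := x) (μ := volume)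
    integrable_phi.integrableOn integrable_phi.integrableOn
  rw [integral_phi] at this
  unfold Phi
  linarith

lemma integrableOn_deriv_bound {x : ℝ} (hx : 0 < x) (c : ℝ) (f : ℝ → ℝ)
    (hmeas : Measurable f) (hbound : ∀ t ∈ Set.Ioi x, ‖f t‖ ≤ c * phi t) :
    IntegrableOn f (Set.Ioi x) := by
  refine Integrable.mono' ((integrable_phi.const_mul c).integrableOn)
    hmeas.aestronglyMeasurable ?_
  exact (ae_restrict_mem measurableSet_Ioi).mono hbound

lemma mills_upper {x : ℝ} (hx : 0 < x) : 1 - Phi x ≤ phi x / x := by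
  set f : ℝ → ℝ := fun t => -(phi t / t) with hf
  set f' : ℝ → ℝ := fun t => phi t + phi t / t ^ 2 with hf'
  have hderiv : ∀ t ∈ Set.Ici x, HasDerivAt f (f' t) t := by
    intro t ht
    have htpos : 0 < t := lt_of_lt_of_le hx ht
    have := ((hasDerivAt_phi t).div (hasDerivAt_id t) htpos.ne').neg
    refine this.congr_deriv ?_
    have ht0 : t ≠ 0 := htpos.ne'
    simp only [hf', id_eq, mul_one]
    field_simp
    ring
  have hint : IntegrableOn f' (Set.Ioi x) := by
    refine integrableOn_deriv_bound hx (1 + x⁻¹ ^ 2) f' ?_ ?_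
    · exact (continuous_phi.measurable).add
        ((continuous_phi.measurable).div ((measurable_id.pow_const 2)))
    · intro t ht
      have htle : x ≤ t := le_of_lt ht
      have htpos : 0 < t := lt_trans hx ht
      have h1 : phi t / t ^ 2 ≤ phi t * x⁻¹ ^ 2 := by
        rw [div_eq_mul_inv, ← inv_pow]
        exact mul_le_mul_of_nonneg_left
          (pow_le_pow_left₀ (inv_nonneg.2 htpos.le) (inv_anti₀ hx htle) 2) (phi_pos t).le
      have h3 : 0 ≤ phi t / t ^ 2 := div_nonneg (phi_pos t).le (sq_nonneg t)
      have h2 : 0 ≤ phi t + phi t / t ^ 2 := by linarith [phi_pos t]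
      rw [hf', Real.norm_eq_abs, abs_of_nonneg h2]
      nlinarith [phi_pos t]
  have hlim : Tendsto f atTop (nhds 0) := by
    have h1 : Tendsto (fun t : ℝ => (t : ℝ)⁻¹) atTop (nhds 0) := tendsto_inv_atTop_zero
    have := (tendsto_phi_atTop.mul h1).neg
    rw [mul_zero, neg_zero] at this
    exact this.congr fun t => by rw [hf]; simp [div_eq_mul_inv]
  have key := integral_Ioi_of_hasDerivAt_of_tendsto' hderiv hint hlim
  rw [hf] at key
  simp only [neg_neg, zero_sub] at key
  have hmono : ∫ t in Set.Ioi x, phi t ≤ ∫ t in Set.Ioi x, f' t := by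
    refine setIntegral_mono_on integrable_phi.integrableOn hint measurableSet_Ioi ?_
    intro t ht
    have : 0 ≤ phi t / t ^ 2 := div_nonneg (phi_pos t).le (sq_nonneg t)
    simp only [hf']
    linarith
  rw [one_sub_Phi, key] at *
  linarith [hmono]

set_option maxHeartbeats 1000000 in
lemma mills_lower {x : ℝ} (hx : 0 < x) : (1/x - 1/x^3) * phi x ≤ 1 - Phi x := by
  set f : ℝ → ℝ := fun t => (1/t - 1/t^3) * phi t with hf
  set f' : ℝ → ℝ := fun t => (3/t^4 - 1) * phi t with hf'
  have hderiv : ∀ t ∈ Set.Ici x, HasDerivAt f (f' t) t := by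
    intro t ht
    have ht0 : t ≠ 0 := (lt_of_lt_of_le hx ht).ne'
    have h1 : HasDerivAt (fun s : ℝ => 1/s - 1/s^3) (-(1/t^2) + 3/t^4) t := by
      have ha : HasDerivAt (fun s : ℝ => 1/s) (-(1/t^2)) t := by
        simpa only [one_div] using hasDerivAt_inv ht0
      have hb : HasDerivAt (fun s : ℝ => 1/s^3) (-(3/t^4)) t := by
        have := ((hasDerivAt_pow 3 t)).inv (pow_ne_zero 3 ht0)
        simp only [one_div]
        refine this.congr_deriv ?_
        field_simp
        ring
      exact (ha.sub hb).congr_deriv (by ring)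
    have h2 := h1.mul (hasDerivAt_phi t)
    refine h2.congr_deriv ?_
    simp only [hf']
    field_simp
    ring
  have hint' : IntegrableOn f' (Set.Ioi x) := by
    refine integrableOn_deriv_bound hx (3/x^4 + 1) f' ?_ ?_
    · exact (((measurable_const.div (measurable_id.pow_const 4))).sub measurable_const).mul
        continuous_phi.measurable
    · intro t ht
      have htpos : 0 < t := lt_trans hx ht
      have hp := phi_pos t
      have h4 : 3/t^4 ≤ 3/x^4 := by
        apply div_le_div_of_nonneg_left (by norm_num) (by positivity)
        exact pow_le_pow_left₀ hx.le (le_of_lt ht) 4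
      have h5 : (0:ℝ) < 3/t^4 := by positivity
      rw [hf', Real.norm_eq_abs, abs_mul, abs_of_pos hp]
      have : |3/t^4 - 1| ≤ 3/x^4 + 1 := by
        rw [abs_le]; constructor <;> nlinarith
      nlinarith
  have hlim : Tendsto f atTop (nhds 0) := by
    have h1 : Tendsto (fun t : ℝ => 1/t - 1/t^3) atTop (nhds 0) := by
      have ha : Tendsto (fun t : ℝ => 1/t) atTop (nhds 0) := by
        simpa only [one_div] using tendsto_inv_atTop_zero
      have hb : Tendsto (fun t : ℝ => 1/t^3) atTop (nhds 0) := by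
        simpa only [one_div, Function.comp_def] using
          tendsto_inv_atTop_zero.comp (tendsto_pow_atTop (n := 3) (by norm_num))
      simpa using ha.sub hb
    have := h1.mul tendsto_phi_atTop
    rw [zero_mul] at this
    exact this
  have key := integral_Ioi_of_hasDerivAt_of_tendsto' hderiv hint' hlim
  rw [zero_sub] at key
  have heq : f x = ∫ t in Set.Ioi x, (-f' t) := by
    rw [integral_neg, key, neg_neg]
  have hmono : ∫ t in Set.Ioi x, (-f' t) ≤ ∫ t in Set.Ioi x, phi t := by
    refine setIntegral_mono_on hint'.neg integrable_phi.integrableOn measurableSet_Ioi ?_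
    intro t ht
    have htpos : 0 < t := lt_trans hx ht
    have hp := phi_pos t
    have h5 : (0:ℝ) < 3/t^4 := by positivity
    simp only [hf']
    nlinarith
  rw [one_sub_Phi]
  calc (1/x - 1/x^3) * phi x = f x := rfl
    _ ≤ ∫ t in Set.Ioi x, phi t := heq ▸ hmono

lemma G_nonneg {x : ℝ} (hx : 0 < x) : 0 ≤ G x := by
  have h := mills_upper hx
  have h2 : x * (1 - Phi x) ≤ x * (phi x / x) := mul_le_mul_of_nonneg_left h hx.le
  have h3 : x * (phi x / x) = phi x := by field_simp
  unfold G; linarith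

lemma G_le {x : ℝ} (hx : 0 < x) : G x ≤ phi x / x^2 := by
  have h := mills_lower hx
  have h2 : x * ((1/x - 1/x^3) * phi x) ≤ x * (1 - Phi x) := mul_le_mul_of_nonneg_left h hx.le
  have h3 : x * ((1/x - 1/x^3) * phi x) = phi x - phi x / x^2 := by field_simp
  unfold G; linarith

/-- For `α ∈ (1/2, 1)` and `κ > 0`, the integral `∫_0^∞ √t G(κ t^{α-1/2}) dt`
is finite and bounded by `(2/(2α-1)) κ^{-3/(2α-1)} ∫_0^∞ v^{(6-6α)/(2α-1)} φ(v) dv`,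
which is itself finite. -/
theorem integral_loss_bound (α κ : ℝ) (hα : α ∈ Set.Ioo (1/2 : ℝ) 1) (hκ : 0 < κ) :
    IntegrableOn (fun t : ℝ => Real.sqrt t * G (κ * t ^ (α - 1/2))) (Set.Ioi 0) ∧
      IntegrableOn (fun v : ℝ => v ^ ((6 - 6 * α) / (2 * α - 1)) * phi v) (Set.Ioi 0) ∧
      ∫ t in Set.Ioi (0 : ℝ), Real.sqrt t * G (κ * t ^ (α - 1/2))
        ≤ (2 / (2 * α - 1)) * κ ^ (-3 / (2 * α - 1))
          * ∫ v in Set.Ioi (0 : ℝ), v ^ ((6 - 6 * α) / (2 * α - 1)) * phi v := by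
  obtain ⟨hα1, hα2⟩ := hα
  have h2a : (0:ℝ) < 2*α - 1 := by linarith
  set q : ℝ := (6 - 6 * α) / (2 * α - 1) with hqdef
  set b : ℝ := α - 1/2 with hbdef
  have hbpos : 0 < b := by rw [hbdef]; linarith
  have hqpos : 0 < q := div_pos (by linarith) h2a
  -- integrability of v^q * phi v on Ioi 0
  have I2 : IntegrableOn (fun v : ℝ => v ^ q * phi v) (Set.Ioi 0) := by
    refine Integrable.congr
      (((integrableOn_rpow_mul_exp_neg_mul_sq (by norm_num : (0:ℝ) < 1/2)
        (by linarith : (-1:ℝ) < q))).const_mul ((Real.sqrt (2*Real.pi))⁻¹)) ?_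
    exact Filter.Eventually.of_forall fun v => by simp only [phi_eq]; ring
  -- the scaled function
  set g : ℝ → ℝ := fun u => (κ*u) ^ q * phi (κ*u) with hgdef
  have Ig : IntegrableOn g (Set.Ioi 0) := by
    have h := (integrableOn_Ioi_comp_mul_left_iff (fun v : ℝ => v ^ q * phi v) 0 hκ)
    rw [mul_zero] at h
    exact h.2 I2
  -- the substituted function
  set F : ℝ → ℝ := fun t => (b * t ^ (b-1)) * g (t ^ b) with hFdef
  have habs : ∀ t : ℝ, (|b| * t ^ (b-1)) • g (t ^ b) = F t := by
    intro t
    rw [hFdef, smul_eq_mul, abs_of_pos hbpos]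
  have hFint : IntegrableOn F (Set.Ioi 0) := by
    have h := (integrableOn_Ioi_comp_rpow_iff g hbpos.ne').2 Ig
    exact h.congr (Filter.Eventually.of_forall habs)
  have hFeq : ∀ t ∈ Set.Ioi (0:ℝ), F t
      = (b * κ ^ q) * (t ^ ((3-4*α)/2) * phi (κ * t ^ b)) := by
    intro t ht
    have htpos : (0:ℝ) < t := ht
    have e1 : (κ * t ^ b) ^ q = κ ^ q * t ^ (b*q) := by
      rw [Real.mul_rpow hκ.le (Real.rpow_nonneg htpos.le b), ← Real.rpow_mul htpos.le]
    have e2 : t ^ (b-1) * t ^ (b*q) = t ^ ((3-4*α)/2) := by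
      rw [← Real.rpow_add htpos]
      congr 1
      rw [hbdef, hqdef]
      have h3 : (α - 1/2) * ((6-6*α)/(2*α-1)) = 3 - 3*α := by
        rw [mul_div_assoc', div_eq_iff h2a.ne']; ring
      linarith
    calc F t = (b * t ^ (b-1)) * ((κ * t ^ b) ^ q * phi (κ * t ^ b)) := rfl
      _ = (b * κ ^ q) * ((t ^ (b-1) * t ^ (b*q)) * phi (κ * t ^ b)) := by rw [e1]; ring
      _ = (b * κ ^ q) * (t ^ ((3-4*α)/2) * phi (κ * t ^ b)) := by rw [e2]
  -- constant
  set c1 : ℝ := b⁻¹ * κ ^ (-(2:ℝ) - q) with hc1def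
  -- pointwise domination
  have hdom : ∀ t ∈ Set.Ioi (0:ℝ), Real.sqrt t * G (κ * t ^ b) ≤ c1 * F t := by
    intro t ht
    have htpos : (0:ℝ) < t := ht
    have hxpos : 0 < κ * t ^ b := mul_pos hκ (Real.rpow_pos_of_pos htpos b)
    have h1 : Real.sqrt t * G (κ * t ^ b)
        ≤ Real.sqrt t * (phi (κ * t ^ b) / (κ * t ^ b)^2) :=
      mul_le_mul_of_nonneg_left (G_le hxpos) (Real.sqrt_nonneg t)
    have hc1F : c1 * F t = κ ^ (-(2:ℝ)) * (t ^ ((3-4*α)/2) * phi (κ * t ^ b)) := by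
      rw [hFeq t ht, hc1def]
      have e3 : κ ^ (-(2:ℝ) - q) * κ ^ q = κ ^ (-(2:ℝ)) := by
        rw [← Real.rpow_add hκ]; ring_nf
      calc (b⁻¹ * κ ^ (-(2:ℝ) - q)) * ((b * κ ^ q) * (t ^ ((3-4*α)/2) * phi (κ * t ^ b)))
          = (b⁻¹ * b) * ((κ ^ (-(2:ℝ) - q) * κ ^ q) * (t ^ ((3-4*α)/2) * phi (κ * t ^ b))) := by
            ring
        _ = κ ^ (-(2:ℝ)) * (t ^ ((3-4*α)/2) * phi (κ * t ^ b)) := by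
            rw [inv_mul_cancel₀ hbpos.ne', e3, one_mul]
    have hsq : Real.sqrt t * (phi (κ * t ^ b) / (κ * t ^ b)^2)
        = κ ^ (-(2:ℝ)) * (t ^ ((3-4*α)/2) * phi (κ * t ^ b)) := by
      have e4 : ((κ * t ^ b)^2 : ℝ) = κ ^ (2:ℝ) * t ^ (b*2) := by
        rw [mul_pow, ← Real.rpow_natCast κ 2, ← Real.rpow_natCast (t ^ b) 2,
          ← Real.rpow_mul htpos.le]
        norm_num
      rw [Real.sqrt_eq_rpow, e4]
      have e5 : t ^ ((1:ℝ)/2) / t ^ (b*2) = t ^ ((3-4*α)/2) := by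
        rw [← Real.rpow_sub htpos]
        congr 1
        rw [hbdef]; ring
      have hk2 : (0:ℝ) < κ ^ (2:ℝ) := Real.rpow_pos_of_pos hκ _
      have ht2 : (0:ℝ) < t ^ (b*2) := Real.rpow_pos_of_pos htpos _
      rw [Real.rpow_neg hκ.le]
      rw [← e5]
      field_simp
    rw [hc1F, ← hsq]
    exact h1
  have hnn : ∀ t ∈ Set.Ioi (0:ℝ), 0 ≤ Real.sqrt t * G (κ * t ^ b) := by
    intro t ht
    have htpos : (0:ℝ) < t := ht
    exact mul_nonneg (Real.sqrt_nonneg t)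
      (G_nonneg (mul_pos hκ (Real.rpow_pos_of_pos htpos b)))
  -- measurability
  have hmeasf : Measurable (fun t : ℝ => Real.sqrt t * G (κ * t ^ b)) := by
    refine (Real.continuous_sqrt.measurable).mul (measurable_G.comp ?_)
    exact ((Real.continuous_rpow_const hbpos.le).measurable).const_mul κ
  -- integrability of f
  have If : IntegrableOn (fun t : ℝ => Real.sqrt t * G (κ * t ^ b)) (Set.Ioi 0) := by
    refine Integrable.mono' (hFint.const_mul c1) hmeasf.aestronglyMeasurable ?_
    filter_upwards [ae_restrict_mem measurableSet_Ioi] with t ht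
    rw [Real.norm_eq_abs, abs_of_nonneg (hnn t ht)]
    exact hdom t ht
  refine ⟨If, I2, ?_⟩
  -- integral of F
  have hIF : ∫ t in Set.Ioi (0:ℝ), F t = κ⁻¹ * ∫ v in Set.Ioi (0:ℝ), v ^ q * phi v := by
    have h1 : ∫ t in Set.Ioi (0:ℝ), F t
        = ∫ t in Set.Ioi (0:ℝ), (|b| * t ^ (b-1)) • g (t ^ b) :=
      (setIntegral_congr_fun measurableSet_Ioi (fun t _ => (habs t).symm))
    rw [h1, integral_comp_rpow_Ioi g hbpos.ne']
    have h2 := integral_comp_mul_left_Ioi (fun v : ℝ => v ^ q * phi v) 0 hκ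
    rw [mul_zero, smul_eq_mul] at h2
    exact h2
  have hconst : c1 * κ⁻¹ = 2 / (2*α-1) * κ ^ (-3 / (2*α-1)) := by
    have e : κ ^ (-(2:ℝ) - q) * κ ^ (-1:ℝ) = κ ^ (-3 / (2*α-1)) := by
      rw [← Real.rpow_add hκ]
      congr 1
      rw [hqdef]
      field_simp
      ring
    have e2 : b⁻¹ = 2 / (2*α-1) := by
      rw [hbdef, show α - 1/2 = (2*α-1)/2 by ring, inv_div]
    calc c1 * κ⁻¹ = b⁻¹ * (κ ^ (-(2:ℝ) - q) * κ ^ (-1:ℝ)) := by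
          rw [hc1def, Real.rpow_neg_one, mul_assoc]
      _ = 2 / (2*α-1) * κ ^ (-3 / (2*α-1)) := by rw [e, e2]
  calc ∫ t in Set.Ioi (0:ℝ), Real.sqrt t * G (κ * t ^ b)
      ≤ ∫ t in Set.Ioi (0:ℝ), c1 * F t :=
        setIntegral_mono_on If (hFint.const_mul c1) measurableSet_Ioi hdom
    _ = c1 * ∫ t in Set.Ioi (0:ℝ), F t := integral_const_mul c1 _
    _ = (c1 * κ⁻¹) * ∫ v in Set.Ioi (0:ℝ), v ^ q * phi v := by rw [hIF]; ring
    _ = 2 / (2*α-1) * κ ^ (-3 / (2*α-1)) * ∫ v in Set.Ioi (0:ℝ), v ^ q * phi v := by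
        rw [hconst]
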